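/- Let W be a real symmetric m×m matrix satisfying 1ᵀW = 1ᵀ, W1 = 1 and ρ(W − 11ᵀ/m) < 1, and set λ₂ := ρ(W − 11ᵀ/m). Let z₀ ∈ ℝᵐ, let ε₀, …, ε_t be vectors in ℝᵐ, and define z_{t+1} := W^{t+1}z₀ + Σ_{s=0}^{t} Wˢ(W−I)ε_{t−s}. Then ‖z_{t+1} − (11ᵀ/m)z₀‖ ≤ λ₂^{t+1}·‖z₀ − (11ᵀ/m)z₀‖ + Σ_{l=0}^{t} λ₂^{t−l}·‖W − I‖·‖ε_l − (11ᵀ/m)ε_l‖, where the matrix norms are spectral (operator 2-)norms and the vector norms Euclidean. -/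

import Mathlib

open Matrix Finset

/-- The m×m averaging matrix `11ᵀ/m`. -/
noncomputable def avgMat (m : ℕ) : Matrix (Fin m) (Fin m) ℝ := Matrix.of fun _ _ => (1 : ℝ) / m

/-- The spectral (operator 2-)norm of a real square matrix. -/
noncomputable def spNorm {m : ℕ} (M : Matrix (Fin m) (Fin m) ℝ) : ℝ :=
  ‖Matrix.toEuclideanCLM (𝕜 := ℝ) M‖

/-- The Euclidean norm of a vector in `ℝᵐ`. -/
noncomputable def eucNorm {m : ℕ} (v : Fin m → ℝ) : ℝ := Real.sqrt (∑ i, v i ^ 2)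

lemma eucNorm_eq {m : ℕ} (v : Fin m → ℝ) :
    eucNorm v = ‖(WithLp.equiv 2 (Fin m → ℝ)).symm v‖ := by
  rw [eucNorm, EuclideanSpace.norm_eq]
  simp [Real.norm_eq_abs, sq_abs]

lemma eucNorm_nonneg {m : ℕ} (v : Fin m → ℝ) : 0 ≤ eucNorm v := Real.sqrt_nonneg _

lemma spNorm_nonneg {m : ℕ} (M : Matrix (Fin m) (Fin m) ℝ) : 0 ≤ spNorm M := norm_nonneg _

lemma eucNorm_add_le {m : ℕ} (a b : Fin m → ℝ) :
    eucNorm (a + b) ≤ eucNorm a + eucNorm b := by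
  simp only [eucNorm_eq]
  rw [show (WithLp.equiv 2 (Fin m → ℝ)).symm (a + b)
      = (WithLp.equiv 2 (Fin m → ℝ)).symm a + (WithLp.equiv 2 (Fin m → ℝ)).symm b from rfl]
  exact norm_add_le _ _

lemma eucNorm_sum_le {m : ℕ} {ι : Type*} (s : Finset ι) (f : ι → Fin m → ℝ) :
    eucNorm (∑ i ∈ s, f i) ≤ ∑ i ∈ s, eucNorm (f i) := by
  classical
  induction s using Finset.induction with
  | empty => simp [eucNorm]
  | insert _ _ h ih =>
    rw [Finset.sum_insert h, Finset.sum_insert h]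
    exact le_trans (eucNorm_add_le _ _) (by linarith)

lemma eucNorm_mulVec_le {m : ℕ} (M : Matrix (Fin m) (Fin m) ℝ) (v : Fin m → ℝ) :
    eucNorm (M.mulVec v) ≤ spNorm M * eucNorm v := by
  simp only [eucNorm_eq]
  have h : (WithLp.equiv 2 (Fin m → ℝ)).symm (M.mulVec v)
      = Matrix.toEuclideanCLM (𝕜 := ℝ) M ((WithLp.equiv 2 _).symm v) := by
    simp [Matrix.toLin'_apply]
  rw [h]
  exact (Matrix.toEuclideanCLM (𝕜 := ℝ) M).le_opNorm _

lemma spNorm_mul_le {m : ℕ} (M N : Matrix (Fin m) (Fin m) ℝ) :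
    spNorm (M * N) ≤ spNorm M * spNorm N := by
  simp only [spNorm, _root_.map_mul]
  exact norm_mul_le _ _

lemma spNorm_pow_le {m : ℕ} (M : Matrix (Fin m) (Fin m) ℝ) (s : ℕ) :
    spNorm (M ^ s) ≤ spNorm M ^ s := by
  induction s with
  | zero =>
    simp only [pow_zero, spNorm, _root_.map_one]
    exact ContinuousLinearMap.norm_id_le
  | succ n ih =>
    rw [pow_succ, pow_succ]
    exact le_trans (spNorm_mul_le _ _) (mul_le_mul_of_nonneg_right ih (spNorm_nonneg M))

lemma spNorm_le_of_eigenvalues {m : ℕ} {A : Matrix (Fin m) (Fin m) ℝ}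
    (hA : A.IsHermitian) {c : ℝ} (hc : 0 ≤ c)
    (h : ∀ i, |hA.eigenvalues i| ≤ c) : spNorm A ≤ c := by
  rw [spNorm]
  refine ContinuousLinearMap.opNorm_le_bound _ hc fun x => ?_
  set T := Matrix.toEuclideanCLM (𝕜 := ℝ) A with hT
  set b := hA.eigenvectorBasis with hb
  have hTb : ∀ i, T (b i) = hA.eigenvalues i • b i := by
    intro i
    apply (WithLp.equiv 2 (Fin m → ℝ)).injective
    simp only [hT, WithLp.equiv_apply, ofLp_toEuclideanCLM]
    have h1 : (b i).ofLp = ⇑(b i) := rfl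
    have h2 : (hA.eigenvalues i • b i).ofLp
        = hA.eigenvalues i • ⇑(b i) := rfl
    rw [h1, h2, hA.mulVec_eigenvectorBasis]
  have hsa : IsSelfAdjoint T := by
    rw [_root_.IsSelfAdjoint, hT, ← map_star (Matrix.toEuclideanCLM (𝕜 := ℝ)) A]
    exact congrArg _ hA
  have hsym := ContinuousLinearMap.isSelfAdjoint_iff_isSymmetric.mp hsa
  have hinner : ∀ v w, inner ℝ (T v) w = (inner ℝ v (T w) : ℝ) := fun v w => hsym v w
  have hrepr : ∀ i, b.repr (T x) i = hA.eigenvalues i * b.repr x i := by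
    intro i
    rw [b.repr_apply_apply, b.repr_apply_apply, ← hinner (b i) x, hTb i,
      real_inner_smul_left]
  have h1 : ‖T x‖ = ‖b.repr (T x)‖ := (b.repr.norm_map (T x)).symm
  have h2 : ‖x‖ = ‖b.repr x‖ := (b.repr.norm_map x).symm
  rw [h1, h2, EuclideanSpace.norm_eq, EuclideanSpace.norm_eq]
  have hle : ∑ i, ‖b.repr (T x) i‖ ^ 2 ≤ c ^ 2 * ∑ i, ‖b.repr x i‖ ^ 2 := by
    rw [Finset.mul_sum]
    refine Finset.sum_le_sum fun i _ => ?_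
    rw [hrepr i]
    have h3 : ‖hA.eigenvalues i * b.repr x i‖ ^ 2
        = (hA.eigenvalues i) ^ 2 * ‖b.repr x i‖ ^ 2 := by
      rw [norm_mul, mul_pow]
      congr 1
      rw [Real.norm_eq_abs, sq_abs]
    rw [h3]
    have h4 : (hA.eigenvalues i) ^ 2 ≤ c ^ 2 := by
      rw [← sq_abs]
      exact pow_le_pow_left₀ (abs_nonneg _) (h i) 2
    exact mul_le_mul_of_nonneg_right h4 (by positivity)
  calc Real.sqrt (∑ i, ‖b.repr (T x) i‖ ^ 2)
      ≤ Real.sqrt (c ^ 2 * ∑ i, ‖b.repr x i‖ ^ 2) := Real.sqrt_le_sqrt hle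
    _ = c * Real.sqrt (∑ i, ‖b.repr x i‖ ^ 2) := by
        rw [Real.sqrt_mul (by positivity), Real.sqrt_sq hc]

lemma abs_eigenvalue_le_spectralRadius {m : ℕ} {A : Matrix (Fin m) (Fin m) ℝ}
    (hA : A.IsHermitian) (hfin : spectralRadius ℝ A ≠ ⊤) (i : Fin m) :
    |hA.eigenvalues i| ≤ (spectralRadius ℝ A).toReal := by
  have hmem : hA.eigenvalues i ∈ spectrum ℝ A := hA.eigenvalues_mem_spectrum_real i
  have hle : ((‖hA.eigenvalues i‖₊ : NNReal) : ENNReal) ≤ spectralRadius ℝ A := by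
    unfold spectralRadius
    exact le_biSup (f := fun k => ((‖k‖₊ : NNReal) : ENNReal)) hmem
  have := ENNReal.toReal_mono hfin hle
  simpa [Real.norm_eq_abs] using this

/-- For a real symmetric `m×m` matrix `W` with `1ᵀW = 1ᵀ`, `W1 = 1`,
`ρ(W − 11ᵀ/m) < 1`, `λ₂ := ρ(W − 11ᵀ/m)`, and `z_{t+1} := W^{t+1}z₀ + Σ_{s=0}^{t} Wˢ(W−I)ε_{t−s}`,
one has `‖z_{t+1} − (11ᵀ/m)z₀‖ ≤ λ₂^{t+1}·‖z₀ − (11ᵀ/m)z₀‖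
+ Σ_{l=0}^{t} λ₂^{t−l}·‖W−I‖·‖ε_l − (11ᵀ/m)ε_l‖`. -/
theorem prop2_deterministic_estimate {m : ℕ}
    (W : Matrix (Fin m) (Fin m) ℝ) (hsym : W.IsSymm)
    (hcol : Matrix.vecMul (fun _ => (1 : ℝ)) W = fun _ => 1)
    (hrow : W.mulVec (fun _ => (1 : ℝ)) = fun _ => 1)
    (hρ : spectralRadius ℝ (W - avgMat m) < 1)
    (lam2 : ℝ) (hlam2 : lam2 = (spectralRadius ℝ (W - avgMat m)).toReal)
    (z₀ : Fin m → ℝ) (ε : ℕ → Fin m → ℝ) (t : ℕ) (zt1 : Fin m → ℝ)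
    (hz : zt1 = (W ^ (t + 1)).mulVec z₀ +
        ∑ s ∈ Finset.range (t + 1), (W ^ s * (W - 1)).mulVec (ε (t - s))) :
    eucNorm (zt1 - (avgMat m).mulVec z₀) ≤
      lam2 ^ (t + 1) * eucNorm (z₀ - (avgMat m).mulVec z₀) +
      ∑ l ∈ Finset.range (t + 1),
        lam2 ^ (t - l) * spNorm (W - 1) * eucNorm (ε l - (avgMat m).mulVec (ε l)) := by
  set J := avgMat m with hJ_def
  set A := W - J with hA_def
  -- basic matrix identities
  have hWJ : W * J = J := by
    ext i j
    have h1 : ∑ k, W i k = 1 := by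
      have := congrFun hrow i
      simpa [Matrix.mulVec, dotProduct] using this
    simp only [Matrix.mul_apply, hJ_def, avgMat, Matrix.of_apply]
    rw [← Finset.sum_mul, h1, one_mul]
  have hJW : J * W = J := by
    ext i j
    have h1 : ∑ k, W k j = 1 := by
      have := congrFun hcol j
      simpa [Matrix.vecMul, dotProduct] using this
    simp only [Matrix.mul_apply, hJ_def, avgMat, Matrix.of_apply]
    rw [← Finset.mul_sum, h1, mul_one]
  have hJJ : J * J = J := by
    ext i j
    have hm : (m : ℝ) ≠ 0 := Nat.cast_ne_zero.mpr i.pos.ne'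
    simp only [Matrix.mul_apply, hJ_def, avgMat, Matrix.of_apply]
    rw [Finset.sum_const, Finset.card_univ, Fintype.card_fin, nsmul_eq_mul]
    field_simp
  have hAJ : A * J = 0 := by rw [hA_def, sub_mul, hWJ, hJJ, sub_self]
  have hJA : J * A = 0 := by rw [hA_def, mul_sub, hJW, hJJ, sub_self]
  have hW1J : (W - 1) * J = 0 := by rw [sub_mul, one_mul, hWJ, sub_self]
  have hWeq : A + J = W := by rw [hA_def]; abel
  have hJpow : ∀ n : ℕ, J * A ^ (n + 1) = 0 := by
    intro n
    rw [pow_succ', ← mul_assoc, hJA, zero_mul]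
  have hApowJ : ∀ n : ℕ, A ^ (n + 1) * J = 0 := by
    intro n
    rw [pow_succ, mul_assoc, hAJ, mul_zero]
  have hJsum : ∀ s : ℕ, J * (A ^ s * (W - 1)) = 0 := by
    intro s
    cases s with
    | zero => rw [pow_zero, one_mul, mul_sub, mul_one, hJW, sub_self]
    | succ n => rw [← mul_assoc, hJpow n, zero_mul]
  have h2 : ∀ s : ℕ, W ^ s * (W - 1) = A ^ s * (W - 1) := by
    intro s
    induction s with
    | zero => rfl
    | succ n ih =>
      calc W ^ (n + 1) * (W - 1) = W * (W ^ n * (W - 1)) := by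
            rw [pow_succ', mul_assoc]
        _ = (A + J) * (A ^ n * (W - 1)) := by rw [ih, hWeq]
        _ = A * (A ^ n * (W - 1)) + J * (A ^ n * (W - 1)) := add_mul _ _ _
        _ = A ^ (n + 1) * (W - 1) := by rw [hJsum n, add_zero, ← mul_assoc, ← pow_succ']
  have h1 : ∀ s : ℕ, W ^ (s + 1) = A ^ (s + 1) + J := by
    intro s
    induction s with
    | zero => rw [pow_one, pow_one, hWeq]
    | succ n ih =>
      calc W ^ (n + 2) = W * W ^ (n + 1) := by rw [pow_succ', ]
        _ = (A + J) * (A ^ (n + 1) + J) := by rw [ih, hWeq]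
        _ = A * A ^ (n + 1) + A * J + (J * A ^ (n + 1) + J * J) := by
            rw [add_mul, mul_add, mul_add]
        _ = A ^ (n + 2) + J := by rw [hAJ, hJpow n, hJJ, add_zero, zero_add, ← pow_succ']
  -- the key vector identity
  have hzt : zt1 - J.mulVec z₀ = (A ^ (t + 1)).mulVec (z₀ - J.mulVec z₀)
      + ∑ s ∈ Finset.range (t + 1),
          (A ^ s * (W - 1)).mulVec (ε (t - s) - J.mulVec (ε (t - s))) := by
    have e1 : (W ^ (t + 1)).mulVec z₀
        = (A ^ (t + 1)).mulVec (z₀ - J.mulVec z₀) + J.mulVec z₀ := by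
      rw [h1 t, Matrix.add_mulVec, Matrix.mulVec_sub, Matrix.mulVec_mulVec, hApowJ t,
        Matrix.zero_mulVec, sub_zero]
    have e2 : ∀ s, (W ^ s * (W - 1)).mulVec (ε (t - s))
        = (A ^ s * (W - 1)).mulVec (ε (t - s) - J.mulVec (ε (t - s))) := by
      intro s
      rw [h2 s, Matrix.mulVec_sub, Matrix.mulVec_mulVec, mul_assoc, hW1J, mul_zero,
        Matrix.zero_mulVec, sub_zero]
    rw [hz, e1, Finset.sum_congr rfl fun s _ => e2 s]
    abel
  -- spectral bound
  have hHerm : A.IsHermitian := by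
    have hWH : Wᴴ = W := by
      ext i j
      simpa [Matrix.conjTranspose_apply] using (congrFun (congrFun hsym j) i).symm
    have hJH : Jᴴ = J := by
      ext i j
      simp [Matrix.conjTranspose_apply, hJ_def, avgMat]
    rw [Matrix.IsHermitian, hA_def, Matrix.conjTranspose_sub, hWH, hJH]
  have hfin : spectralRadius ℝ A ≠ ⊤ := (hρ.trans ENNReal.one_lt_top).ne
  have hlam2_nonneg : 0 ≤ lam2 := hlam2 ▸ ENNReal.toReal_nonneg
  have hspA : spNorm A ≤ lam2 := by
    rw [hlam2]
    exact spNorm_le_of_eigenvalues hHerm ENNReal.toReal_nonneg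
      fun i => abs_eigenvalue_le_spectralRadius hHerm hfin i
  -- norm estimates
  have hX : eucNorm ((A ^ (t + 1)).mulVec (z₀ - J.mulVec z₀))
      ≤ lam2 ^ (t + 1) * eucNorm (z₀ - J.mulVec z₀) := by
    refine le_trans (eucNorm_mulVec_le _ _) (mul_le_mul_of_nonneg_right ?_ (eucNorm_nonneg _))
    exact le_trans (spNorm_pow_le _ _) (pow_le_pow_left₀ (spNorm_nonneg _) hspA _)
  have hterm : ∀ s, eucNorm ((A ^ s * (W - 1)).mulVec (ε (t - s) - J.mulVec (ε (t - s))))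
      ≤ lam2 ^ s * spNorm (W - 1) * eucNorm (ε (t - s) - J.mulVec (ε (t - s))) := by
    intro s
    refine le_trans (eucNorm_mulVec_le _ _) (mul_le_mul_of_nonneg_right ?_ (eucNorm_nonneg _))
    refine le_trans (spNorm_mul_le _ _) ?_
    exact mul_le_mul_of_nonneg_right
      (le_trans (spNorm_pow_le _ _) (pow_le_pow_left₀ (spNorm_nonneg _) hspA _))
      (spNorm_nonneg _)
  have hreindex : ∑ s ∈ Finset.range (t + 1),
        lam2 ^ s * spNorm (W - 1) * eucNorm (ε (t - s) - J.mulVec (ε (t - s)))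
      = ∑ l ∈ Finset.range (t + 1),
        lam2 ^ (t - l) * spNorm (W - 1) * eucNorm (ε l - J.mulVec (ε l)) := by
    rw [← Finset.sum_range_reflect
      (fun l => lam2 ^ (t - l) * spNorm (W - 1) * eucNorm (ε l - J.mulVec (ε l))) (t + 1)]
    refine Finset.sum_congr rfl fun j hj => ?_
    have hj' : j ≤ t := Nat.lt_succ_iff.mp (Finset.mem_range.mp hj)
    simp [Nat.succ_sub_one, Nat.sub_sub_self hj']
  calc eucNorm (zt1 - J.mulVec z₀)
      ≤ eucNorm ((A ^ (t + 1)).mulVec (z₀ - J.mulVec z₀))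
        + eucNorm (∑ s ∈ Finset.range (t + 1),
            (A ^ s * (W - 1)).mulVec (ε (t - s) - J.mulVec (ε (t - s)))) := by
        rw [hzt]; exact eucNorm_add_le _ _
    _ ≤ lam2 ^ (t + 1) * eucNorm (z₀ - J.mulVec z₀)
        + ∑ s ∈ Finset.range (t + 1),
            lam2 ^ s * spNorm (W - 1) * eucNorm (ε (t - s) - J.mulVec (ε (t - s))) := by
        refine add_le_add hX (le_trans (eucNorm_sum_le _ _) ?_)
        exact Finset.sum_le_sum fun s _ => hterm s
    _ = lam2 ^ (t + 1) * eucNorm (z₀ - J.mulVec z₀)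
        + ∑ l ∈ Finset.range (t + 1),
            lam2 ^ (t - l) * spNorm (W - 1) * eucNorm (ε l - J.mulVec (ε l)) := by
        rw [hreindex]
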